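/- Let s be a synchronizing word of an n-state complete DFA synchronizing to a single state q, and let S be the rational series depending on Q = {q}, i.e., (S,u) = C(M_u − E)P^t with P^t the characteristic vector of {q}. Then for the ℚ-span V of the matrices M_v over all suffixes v of s with (S,v) ≥ n − i, one has dim(V) ≤ (i−1)n + 1. -/

import Mathlib

/-- The 0-1 matrix of the action of the word `w` on the states `Fin n`. -/
def wordMat {n : ℕ} {A : Type*} (δ : Fin n → A → Fin n) (w : List A) :
    Matrix (Fin n) (Fin n) ℚ :=
  fun i j => if w.foldl δ i = j then 1 else 0

/-- The rational series `(S,u) = C (M_u − E) Pᵗ` depending on `Q = {q}`. -/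
def ser {n : ℕ} (q : Fin n) (M : Matrix (Fin n) (Fin n) ℚ) : ℚ :=
  ∑ i, ∑ j, (M - 1) i j * (if j = q then 1 else 0)

lemma ser_wordMat {n : ℕ} (q : Fin n) {A : Type*} (δ : Fin n → A → Fin n) (v : List A) :
    ser q (wordMat δ v) =
      ((Finset.univ.filter fun p => v.foldl δ p = q).card : ℚ) - 1 := by
  unfold ser wordMat
  simp only [Matrix.sub_apply, Matrix.one_apply, mul_ite, mul_one, mul_zero]
  rw [Finset.sum_comm]
  simp [Finset.sum_ite_eq, Finset.sum_sub_distrib, Finset.sum_ite_eq']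
  show ∑ x, (wordMat δ v - 1) x q = _
  simp [Matrix.sub_apply, Matrix.one_apply, wordMat, Finset.sum_sub_distrib, Finset.sum_boole]

/-- Decomposition of a word matrix. -/
lemma wordMat_decomp {n : ℕ} {A : Type*} (δ : Fin n → A → Fin n) (v : List A) (q : Fin n) :
    wordMat δ v = (Matrix.of fun _ j => if j = q then (1 : ℚ) else 0) +
      ∑ p : Fin n, (Matrix.single p (v.foldl δ p) 1
        - Matrix.single p q 1) := by
  ext p' j
  simp only [wordMat, Matrix.add_apply, Matrix.of_apply, Matrix.sum_apply,
    Matrix.sub_apply, Matrix.single, Matrix.of_apply,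
    Finset.sum_sub_distrib]
  rw [Finset.sum_eq_single p', Finset.sum_eq_single p']
  · simp only [@eq_comm _ q j]
    by_cases h1 : v.foldl δ p' = j <;> by_cases h2 : j = q <;>
      simp [h1, h2]
  · intro b _ hb; simp [hb]
  · simp
  · intro b _ hb; simp [hb]
  · simp

/-- For a synchronizing word `s` of an `n`-state automaton synchronizing to
the state `q`, the ℚ-span `V` of the matrices `M_v` of the suffixes `v` of
`s` with `(S,v) ≥ n − i` satisfies `dim V ≤ (i−1)n + 1`. -/
theorem dim_span_suffix_matrices {n : ℕ} {A : Type*} (δ : Fin n → A → Fin n)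
    (s : List A) (q : Fin n) (hs : ∀ p : Fin n, s.foldl δ p = q)
    (i : ℕ) (hi : 1 ≤ i) :
    Module.finrank ℚ
      ↥(Submodule.span ℚ
        {M : Matrix (Fin n) (Fin n) ℚ |
          ∃ v : List A, v <:+ s ∧ M = wordMat δ v ∧
            (n : ℚ) - i ≤ ser q (wordMat δ v)}) ≤
      (i - 1) * n + 1 := by
  classical
  -- the predicate on suffixes
  set P : List A → Prop := fun v => v <:+ s ∧ (n : ℚ) - i ≤ ser q (wordMat δ v) with hP
  have hPs : P s := by
    refine ⟨List.suffix_refl s, ?_⟩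
    rw [ser_wordMat]
    have : (Finset.univ.filter fun p => s.foldl δ p = q) = Finset.univ := by
      ext p; simp [hs p]
    rw [this]
    simp only [Finset.card_univ, Fintype.card_fin]
    have : (1 : ℚ) ≤ i := by exact_mod_cast hi
    linarith
  -- choose a suffix of minimal length satisfying P
  have hex : ∃ m : ℕ, ∃ v, P v ∧ v.length = m := ⟨s.length, s, hPs, rfl⟩
  obtain ⟨v0, hv0P, hv0len⟩ := Nat.find_spec hex
  have hmin : ∀ v, P v → v0.length ≤ v.length := by
    intro v hv
    rw [hv0len]
    exact Nat.find_le ⟨v, hv, rfl⟩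
  -- the image of the action of v0
  set T : Finset (Fin n) := Finset.univ.image (fun p => v0.foldl δ p) with hT
  -- cardinality of the preimage of q under v0
  set k : ℕ := (Finset.univ.filter fun p => v0.foldl δ p = q).card with hk
  have hkk : (n : ℚ) - i ≤ (k : ℚ) - 1 := by
    have := hv0P.2; rwa [ser_wordMat] at this
  have hnk : n ≤ k + (i - 1) := by
    have : (n : ℚ) ≤ (k : ℚ) + ((i - 1 : ℕ) : ℚ) := by
      have : ((i - 1 : ℕ) : ℚ) = (i : ℚ) - 1 := by
        push_cast [Nat.cast_sub hi]; ring
      rw [this]; linarith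
    exact_mod_cast this
  -- card T ≤ i
  have hTcard : T.card ≤ i := by
    have hsub : T ⊆ insert q ((Finset.univ.filter fun p => v0.foldl δ p ≠ q).image
        (fun p => v0.foldl δ p)) := by
      intro t ht
      simp only [hT, Finset.mem_image, Finset.mem_univ, true_and] at ht
      obtain ⟨p, rfl⟩ := ht
      by_cases h : v0.foldl δ p = q
      · simp [h]
      · simp only [Finset.mem_insert]
        right
        exact Finset.mem_image.2 ⟨p, by simp [h], rfl⟩
    calc T.card ≤ _ := Finset.card_le_card hsub
      _ ≤ ((Finset.univ.filter fun p => v0.foldl δ p ≠ q).image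
          (fun p => v0.foldl δ p)).card + 1 := Finset.card_insert_le _ _
      _ ≤ (Finset.univ.filter fun p => v0.foldl δ p ≠ q).card + 1 :=
          by gcongr ?_ + 1; exact Finset.card_image_le
      _ ≤ i := by
          have h2 : (Finset.univ.filter fun p => v0.foldl δ p ≠ q).card = n - k := by
            have := Finset.card_filter_add_card_filter_not
              (s := (Finset.univ : Finset (Fin n)))
              (p := fun p => v0.foldl δ p = q)
            simp only [Finset.card_univ, Fintype.card_fin] at this
            rw [← hk] at this
            simp only [ne_eq]
            omega
          omega
  -- generating finset
  set E : Fin n → Fin n → Matrix (Fin n) (Fin n) ℚ :=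
    fun p t => Matrix.single p t 1 with hE
  set J : Matrix (Fin n) (Fin n) ℚ :=
    Matrix.of fun _ j => if j = q then (1 : ℚ) else 0 with hJ
  set G : Finset (Matrix (Fin n) (Fin n) ℚ) :=
    insert J ((Finset.univ ×ˢ T.erase q).image fun pt => E pt.1 pt.2 - E pt.1 q) with hG
  -- every matrix in the set lies in span G
  have h1 : Submodule.span ℚ {M : Matrix (Fin n) (Fin n) ℚ |
      ∃ v : List A, v <:+ s ∧ M = wordMat δ v ∧
        (n : ℚ) - i ≤ ser q (wordMat δ v)} ≤ Submodule.span ℚ (G : Set _) := by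
    rw [Submodule.span_le]
    rintro M ⟨v, hvs, rfl, hser⟩
    have hvP : P v := ⟨hvs, hser⟩
    -- v0 is a suffix of v
    have hsuf : v0 <:+ v :=
      List.suffix_of_suffix_length_le hv0P.1 hvs (hmin v hvP)
    obtain ⟨u, rfl⟩ := hsuf
    -- image of the action of u ++ v0 is contained in T
    have himg : ∀ p : Fin n, (u ++ v0).foldl δ p ∈ T := by
      intro p
      rw [List.foldl_append]
      exact Finset.mem_image.2 ⟨u.foldl δ p, Finset.mem_univ _, rfl⟩
    rw [wordMat_decomp δ (u ++ v0) q]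
    refine Submodule.add_mem _ (Submodule.subset_span ?_) (Submodule.sum_mem _ ?_)
    · simp [hG, hJ]
    · intro p _
      by_cases h : (u ++ v0).foldl δ p = q
      · rw [h]; simp
      · refine Submodule.subset_span ?_
        simp only [hG, Finset.coe_insert, Set.mem_insert_iff, Finset.coe_image,
          Set.mem_image]
        right
        refine ⟨(p, (u ++ v0).foldl δ p), ?_, rfl⟩
        simp only [Finset.mem_coe, Finset.mem_product, Finset.mem_univ, true_and]
        exact Finset.mem_erase.2 ⟨h, himg p⟩
  -- card bound for G
  have hGcard : G.card ≤ (i - 1) * n + 1 := by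
    have hTE : (T.erase q).card ≤ i - 1 := by
      -- q ∈ T since s = w ++ v0 for some w and n ≥ 1 when Fin n nonempty
      have hqT : q ∈ T := by
        obtain ⟨w, hw⟩ := hv0P.1
        have := hs q
        rw [← hw, List.foldl_append] at this
        exact Finset.mem_image.2 ⟨w.foldl δ q, Finset.mem_univ _, this⟩
      rw [Finset.card_erase_of_mem hqT]
      omega
    calc G.card ≤ ((Finset.univ ×ˢ T.erase q).image
          fun pt : Fin n × Fin n => E pt.1 pt.2 - E pt.1 q).card + 1 :=
        Finset.card_insert_le _ _
      _ ≤ (Finset.univ ×ˢ T.erase q).card + 1 := by gcongr; exact Finset.card_image_le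
      _ = n * (T.erase q).card + 1 := by
          rw [Finset.card_product, Finset.card_univ, Fintype.card_fin]
      _ ≤ (i - 1) * n + 1 := by
          have : n * (T.erase q).card ≤ n * (i - 1) := Nat.mul_le_mul_left n hTE
          rw [Nat.mul_comm (i - 1) n]
          omega
  exact le_trans (le_trans (Submodule.finrank_mono h1)
    (finrank_span_finset_le_card G)) hGcard
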